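/- Vanishing of the smooth Čech cohomology of an open cover in positive degrees: let M be a smooth m-dimensional manifold without boundary, Hausdorff and second countable, let (U_i)_{i ∈ ℕ} be a countable family of open sets covering M, and let n ≥ 1. Suppose c assigns to each (n+1)-tuple j : Fin (n+1) → ℕ a function c(j) : M → ℝ that is smooth on the intersection V(j) = ⋂_{l} U_{j(l)}, is alternating (c(j ∘ σ)(x) = sign(σ) · c(j)(x) for every permutation σ of Fin (n+1) and every x), and satisfies the cocycle condition: for every (n+2)-tuple j : Fin (n+2) → ℕ and every x ∈ ⋂_{l} U_{j(l)}, Σ_{k=0}^{n+1} (−1)^k · c(j ∘ Fin.succAbove k)(x) = 0. Then there exists a family b assigning to each n-tuple j : Fin n → ℕ a function b(j) : M → ℝ smooth on ⋂_{l} U_{j(l)} and alternating, such that for every (n+1)-tuple j : Fin (n+1) → ℕ and every x ∈ ⋂_{l} U_{j(l)}, Σ_{k=0}^{n} (−1)^k · b(j ∘ Fin.succAbove k)(x) = c(j)(x). -/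

import Mathlib

open scoped Manifold BigOperators

/-- Vanishing of the smooth Čech cohomology of a countable open cover of a smooth
manifold in positive degrees: every alternating Čech `n`-cochain `c` (with `n ≥ 1`)
of smooth functions satisfying the cocycle condition is the Čech coboundary of an
alternating `(n-1)`-cochain `b` of smooth functions. -/
theorem cech_cohomology_smooth_vanishes (m n : ℕ) (hn : 1 ≤ n) (M : Type*)
    [TopologicalSpace M] [T2Space M] [SecondCountableTopology M]
    [ChartedSpace (EuclideanSpace ℝ (Fin m)) M]
    [IsManifold (𝓘(ℝ, EuclideanSpace ℝ (Fin m))) (⊤ : ℕ∞) M]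
    (U : ℕ → Set M) (hUopen : ∀ i, IsOpen (U i)) (hUcover : (⋃ i, U i) = Set.univ)
    (c : (Fin (n + 1) → ℕ) → M → ℝ)
    (hsmooth : ∀ j : Fin (n + 1) → ℕ,
      ContMDiffOn (𝓘(ℝ, EuclideanSpace ℝ (Fin m))) 𝓘(ℝ, ℝ) (⊤ : ℕ∞) (c j) (⋂ l, U (j l)))
    (halt : ∀ (j : Fin (n + 1) → ℕ) (σ : Equiv.Perm (Fin (n + 1))) (x : M),
      c (j ∘ σ) x = ((Equiv.Perm.sign σ : ℤ) : ℝ) * c j x)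
    (hcocycle : ∀ j : Fin (n + 2) → ℕ, ∀ x ∈ ⋂ l, U (j l),
      ∑ k : Fin (n + 2), (-1 : ℝ) ^ (k : ℕ) * c (j ∘ k.succAbove) x = 0) :
    ∃ b : (Fin n → ℕ) → M → ℝ,
      (∀ j : Fin n → ℕ,
        ContMDiffOn (𝓘(ℝ, EuclideanSpace ℝ (Fin m))) 𝓘(ℝ, ℝ) (⊤ : ℕ∞) (b j) (⋂ l, U (j l))) ∧
      (∀ (j : Fin n → ℕ) (σ : Equiv.Perm (Fin n)) (x : M),
        b (j ∘ σ) x = ((Equiv.Perm.sign σ : ℤ) : ℝ) * b j x) ∧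
      (∀ j : Fin (n + 1) → ℕ, ∀ x ∈ ⋂ l, U (j l),
        ∑ k : Fin (n + 1), (-1 : ℝ) ^ (k : ℕ) * b (j ∘ k.succAbove) x = c j x) := by
  haveI : LocallyCompactSpace M :=
    ChartedSpace.locallyCompactSpace (EuclideanSpace ℝ (Fin m)) M
  obtain ⟨ρ, hρ⟩ := SmoothPartitionOfUnity.exists_isSubordinate
    (𝓘(ℝ, EuclideanSpace ℝ (Fin m))) isClosed_univ U hUopen hUcover.ge
  -- the candidate primitive
  set b : (Fin n → ℕ) → M → ℝ := fun j x => ∑ᶠ i, ρ i x * c (Fin.cons i j) x with hb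
  have hsupp : ∀ i, Function.support (ρ i) ⊆ U i :=
    fun i => subset_trans subset_closure (hρ i)
  have hptfin : ∀ x : M, (Function.support fun i => ρ i x).Finite := by
    intro x
    exact ρ.locallyFinite.point_finite x
  -- support of the summand
  have hsupp2 : ∀ (j : Fin n → ℕ) (x : M),
      (Function.support fun i => ρ i x * c (Fin.cons i j) x) ⊆
        Function.support fun i => ρ i x := by
    intro j x i hi
    simp only [Function.mem_support] at hi ⊢
    exact fun h => hi (by rw [h, zero_mul])
  refine ⟨b, ?_, ?_, ?_⟩
  · -- smoothness
    intro j x hx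
    have hterm : ∀ i : ℕ, ContMDiffAt (𝓘(ℝ, EuclideanSpace ℝ (Fin m))) 𝓘(ℝ, ℝ) (⊤ : ℕ∞)
        (fun y => ρ i y * c (Fin.cons i j) y) x := by
      intro i
      by_cases hxi : x ∈ tsupport (ρ i)
      · have hxU : x ∈ U i := hρ i hxi
        have hmem : x ∈ ⋂ l, U ((Fin.cons i j : _ → ℕ) l) := by
          refine Set.mem_iInter.2 fun l => ?_
          refine Fin.cases ?_ (fun l' => ?_) l
          · simpa using hxU
          · simpa using Set.mem_iInter.1 hx l'
        have hopen : IsOpen (⋂ l, U ((Fin.cons i j : _ → ℕ) l)) :=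
          isOpen_iInter_of_finite fun l => hUopen _
        exact ((ρ i).contMDiff.contMDiffAt).mul
          (((hsmooth (Fin.cons i j)).contMDiffAt (hopen.mem_nhds hmem)))
      · refine (contMDiffAt_const (c := (0:ℝ))).congr_of_eventuallyEq ?_
        have : (tsupport (ρ i))ᶜ ∈ nhds x :=
          (isClosed_tsupport (ρ i)).isOpen_compl.mem_nhds hxi
        filter_upwards [this] with y hy
        have : ρ i y = 0 := image_eq_zero_of_notMem_tsupport hy
        simp [this]
    obtain ⟨t, ht, hft⟩ := ρ.locallyFinite x
    have heq : ∀ y ∈ t, b j y = ∑ i ∈ hft.toFinset, ρ i y * c (Fin.cons i j) y := by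
      intro y hy
      refine finsum_eq_sum_of_support_subset _ ?_
      intro i hi
      have hiy : ρ i y ≠ 0 := by
        intro h; exact (hsupp2 j y hi) (by simpa [Function.mem_support] using h)
      simp only [Set.Finite.coe_toFinset, Set.mem_setOf_eq]
      exact ⟨y, hsupp2 j y hi, hy⟩
    have : ContMDiffAt (𝓘(ℝ, EuclideanSpace ℝ (Fin m))) 𝓘(ℝ, ℝ) (⊤ : ℕ∞)
        (fun y => ∑ i ∈ hft.toFinset, ρ i y * c (Fin.cons i j) y) x :=
      contMDiffAt_finset_sum fun i _ => hterm i
    refine (this.congr_of_eventuallyEq ?_).contMDiffWithinAt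
    filter_upwards [ht] with y hy using heq y hy
  · -- alternating
    intro j σ x
    set τ : Equiv.Perm (Fin (n + 1)) := Equiv.Perm.decomposeFin.symm (0, σ) with hτ
    have hcons : ∀ i : ℕ, Fin.cons i (j ∘ σ) = (Fin.cons i j) ∘ τ := by
      intro i
      funext k
      refine Fin.cases ?_ (fun k' => ?_) k
      · simp [hτ]
      · simp [hτ]
    have hsign : ((Equiv.Perm.sign τ : ℤ) : ℝ) = ((Equiv.Perm.sign σ : ℤ) : ℝ) := by
      simp [hτ]
    calc b (j ∘ σ) x = ∑ᶠ i, ρ i x * c (Fin.cons i (j ∘ σ)) x := rfl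
      _ = ∑ᶠ i, ((Equiv.Perm.sign σ : ℤ) : ℝ) * (ρ i x * c (Fin.cons i j) x) := by
          refine finsum_congr fun i => ?_
          rw [hcons i, halt (Fin.cons i j) τ x, hsign]; ring
      _ = ((Equiv.Perm.sign σ : ℤ) : ℝ) * b j x := by
          rw [hb]
          exact (mul_finsum _ _).symm
  · -- coboundary
    intro j x hx
    classical
    set S : Finset ℕ := (hptfin x).toFinset with hS
    have hrepr : ∀ j' : Fin n → ℕ,
        b j' x = ∑ i ∈ S, ρ i x * c (Fin.cons i j') x := by
      intro j'
      refine finsum_eq_sum_of_support_subset _ ?_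
      intro i hi
      simp only [hS, Set.Finite.coe_toFinset]
      exact hsupp2 j' x hi
    have key : ∀ i : ℕ, ρ i x ≠ 0 →
        ∑ k : Fin (n + 1), (-1 : ℝ) ^ (k : ℕ) * c (Fin.cons i (j ∘ k.succAbove)) x
          = c j x := by
      intro i hi
      have hxU : x ∈ U i := hsupp i hi
      have hmem : x ∈ ⋂ l, U ((Fin.cons i j : _ → ℕ) l) := by
        refine Set.mem_iInter.2 fun l => ?_
        refine Fin.cases ?_ (fun l' => ?_) l
        · simpa using hxU
        · simpa using Set.mem_iInter.1 hx l'
      have hc := hcocycle (Fin.cons i j) x hmem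
      rw [Fin.sum_univ_succ] at hc
      have h0 : (Fin.cons i j : Fin (n+2) → ℕ) ∘ (Fin.succAbove 0) = j := by
        funext l; simp
      have hsucc : ∀ k : Fin (n + 1),
          (Fin.cons i j : Fin (n+2) → ℕ) ∘ (Fin.succAbove k.succ)
            = Fin.cons i (j ∘ k.succAbove) := by
        intro k; funext l
        refine Fin.cases ?_ (fun l' => ?_) l
        · simp
        · simp [Fin.succ_succAbove_succ]
      rw [h0] at hc
      simp only [Fin.val_zero, pow_zero, one_mul] at hc
      have hc2 : c j x + ∑ k : Fin (n + 1),
          (-1 : ℝ) ^ ((k : ℕ) + 1) * c (Fin.cons i (j ∘ k.succAbove)) x = 0 := by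
        rw [← hc]
        congr 1
        refine Finset.sum_congr rfl fun k _ => ?_
        rw [hsucc k]
        simp [Fin.val_succ]
      have : ∑ k : Fin (n + 1),
          (-1 : ℝ) ^ ((k : ℕ) + 1) * c (Fin.cons i (j ∘ k.succAbove)) x
          = - ∑ k : Fin (n + 1),
          (-1 : ℝ) ^ (k : ℕ) * c (Fin.cons i (j ∘ k.succAbove)) x := by
        rw [← Finset.sum_neg_distrib]
        exact Finset.sum_congr rfl fun k _ => by ring
      rw [this] at hc2
      linarith
    calc ∑ k : Fin (n + 1), (-1 : ℝ) ^ (k : ℕ) * b (j ∘ k.succAbove) x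
        = ∑ k : Fin (n + 1), ∑ i ∈ S,
            (-1 : ℝ) ^ (k : ℕ) * (ρ i x * c (Fin.cons i (j ∘ k.succAbove)) x) := by
          refine Finset.sum_congr rfl fun k _ => ?_
          rw [hrepr (j ∘ k.succAbove), Finset.mul_sum]
      _ = ∑ i ∈ S, ρ i x *
            ∑ k : Fin (n + 1), (-1 : ℝ) ^ (k : ℕ) * c (Fin.cons i (j ∘ k.succAbove)) x := by
          rw [Finset.sum_comm]
          refine Finset.sum_congr rfl fun i _ => ?_
          rw [Finset.mul_sum]
          exact Finset.sum_congr rfl fun k _ => by ring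
      _ = ∑ i ∈ S, ρ i x * c j x := by
          refine Finset.sum_congr rfl fun i hi => ?_
          have : ρ i x ≠ 0 := by
            simpa [hS, Function.mem_support] using (hptfin x).mem_toFinset.1 hi
          rw [key i this]
      _ = (∑ i ∈ S, ρ i x) * c j x := by rw [Finset.sum_mul]
      _ = c j x := by
          have h1 : ∑ᶠ i, ρ i x = 1 := ρ.sum_eq_one (Set.mem_univ x)
          have h2 : ∑ᶠ i, ρ i x = ∑ i ∈ S, ρ i x := by
            refine finsum_eq_sum_of_support_subset _ ?_
            simp [hS]
          rw [← h2, h1, one_mul]
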